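/- Define (y,r) : [0, 2+2π] → ℝ³ × SO(3) piecewise by: on (0,1), y(t) = (t,0,0), d₁ = (1,0,0), d₂(t) = (0, cos(πt), sin(πt)); on (1, 1+π), y(t) = (1+sin(t−1), 0, 1−cos(t−1)), d₁(t) = (cos(t−1), 0, sin(t−1)), d₂ = (0,−1,0); on (1+π, 2+π), y(t) = (2+π−t, 0, 2), d₁ = (−1,0,0), d₂ = (0,−1,0); on (2+π, 2+2π), y(t) = (sin(t−2), 0, 1−cos(t−2)), d₁(t) = (cos(t−2), 0, sin(t−2)), d₂ = (0,−1,0); with d₃ = d₁ × d₂. Then (y, d₁, d₂, d₃) is continuous (y is C¹), y' = d₁ a.e., d₁'·d₂ = 0 a.e., (d₁,d₂,d₃) is an orthonormal frame with determinant 1, and the boundary conditions y(0) = y(2+2π) = 0, (d₁,d₂,d₃)(0) = (e₁,e₂,e₃), (d₁,d₂,d₃)(2+2π) = (e₁,−e₂,−e₃) hold (in the limit sense at the endpoints). -/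

import Mathlib

open Matrix MeasureTheory Real

/-- Centerline of the explicit planar developable Möbius band. -/
noncomputable def yM (t : ℝ) : Fin 3 → ℝ :=
  if t ≤ 1 then ![t, 0, 0]
  else if t ≤ 1 + π then ![1 + Real.sin (t - 1), 0, 1 - Real.cos (t - 1)]
  else if t ≤ 2 + π then ![2 + π - t, 0, 2]
  else ![Real.sin (t - 2), 0, 1 - Real.cos (t - 2)]

/-- Tangent director `d₁`. -/
noncomputable def d1M (t : ℝ) : Fin 3 → ℝ :=
  if t ≤ 1 then ![1, 0, 0]
  else if t ≤ 1 + π then ![Real.cos (t - 1), 0, Real.sin (t - 1)]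
  else if t ≤ 2 + π then ![-1, 0, 0]
  else ![Real.cos (t - 2), 0, Real.sin (t - 2)]

/-- Transversal director `d₂`. -/
noncomputable def d2M (t : ℝ) : Fin 3 → ℝ :=
  if t ≤ 1 then ![0, Real.cos (π * t), Real.sin (π * t)]
  else ![0, -1, 0]

/-- Normal director `d₃ = d₁ × d₂`. -/
noncomputable def d3M (t : ℝ) : Fin 3 → ℝ := d1M t ⨯₃ d2M t

lemma cont_vec3 {f g h : ℝ → ℝ} (hf : Continuous f) (hg : Continuous g) (hh : Continuous h) :
    Continuous fun t => ![f t, g t, h t] := by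
  refine continuous_pi fun i => ?_
  fin_cases i <;> simpa

lemma hasDerivAt_vec3 {f g h : ℝ → ℝ} {f' g' h' t : ℝ}
    (hf : HasDerivAt f f' t) (hg : HasDerivAt g g' t) (hh : HasDerivAt h h' t) :
    HasDerivAt (fun s => ![f s, g s, h s]) ![f', g', h'] t := by
  rw [hasDerivAt_pi]
  intro i; fin_cases i <;> simpa

lemma yM_cont : Continuous yM := by
  have hB : Continuous fun t : ℝ => ![1 + Real.sin (t - 1), 0, 1 - Real.cos (t - 1)] :=
    cont_vec3 (by fun_prop) continuous_const (by fun_prop)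
  have hC : Continuous fun t : ℝ => ![2 + π - t, 0, (2:ℝ)] :=
    cont_vec3 (by fun_prop) continuous_const continuous_const
  have hD : Continuous fun t : ℝ => ![Real.sin (t - 2), 0, 1 - Real.cos (t - 2)] :=
    cont_vec3 (by fun_prop) continuous_const (by fun_prop)
  have h3 : Continuous fun t : ℝ =>
      if t ≤ 2 + π then ![2 + π - t, 0, (2:ℝ)] else ![Real.sin (t - 2), 0, 1 - Real.cos (t - 2)] := by
    refine Continuous.if_le hC hD continuous_id continuous_const ?_
    intro x hx; subst hx
    funext i; fin_cases i <;> norm_num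
  have h2 : Continuous fun t : ℝ =>
      if t ≤ 1 + π then ![1 + Real.sin (t - 1), 0, 1 - Real.cos (t - 1)]
      else if t ≤ 2 + π then ![2 + π - t, 0, (2:ℝ)]
      else ![Real.sin (t - 2), 0, 1 - Real.cos (t - 2)] := by
    refine Continuous.if_le hB h3 continuous_id continuous_const ?_
    intro x hx; subst hx
    rw [if_pos (show (1:ℝ) + π ≤ 2 + π by linarith)]
    funext i; fin_cases i <;> norm_num
  unfold yM
  refine Continuous.if_le (cont_vec3 continuous_id continuous_const continuous_const) h2
    continuous_id continuous_const ?_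
  intro x hx; subst hx
  rw [if_pos (show (1:ℝ) ≤ 1 + π by linarith [Real.pi_pos])]
  funext i; fin_cases i <;> norm_num

lemma d1M_cont : Continuous d1M := by
  have hB : Continuous fun t : ℝ => ![Real.cos (t - 1), 0, Real.sin (t - 1)] :=
    cont_vec3 (by fun_prop) continuous_const (by fun_prop)
  have hD : Continuous fun t : ℝ => ![Real.cos (t - 2), 0, Real.sin (t - 2)] :=
    cont_vec3 (by fun_prop) continuous_const (by fun_prop)
  have h3 : Continuous fun t : ℝ =>
      if t ≤ 2 + π then ![(-1:ℝ), 0, 0] else ![Real.cos (t - 2), 0, Real.sin (t - 2)] := by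
    refine Continuous.if_le continuous_const hD continuous_id continuous_const ?_
    intro x hx; subst hx
    funext i; fin_cases i <;> norm_num [Real.cos_pi, Real.sin_pi]
  have h2 : Continuous fun t : ℝ =>
      if t ≤ 1 + π then ![Real.cos (t - 1), 0, Real.sin (t - 1)]
      else if t ≤ 2 + π then ![(-1:ℝ), 0, 0]
      else ![Real.cos (t - 2), 0, Real.sin (t - 2)] := by
    refine Continuous.if_le hB h3 continuous_id continuous_const ?_
    intro x hx; subst hx
    rw [if_pos (show (1:ℝ) + π ≤ 2 + π by linarith)]
    funext i; fin_cases i <;> norm_num [Real.cos_pi, Real.sin_pi]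
  unfold d1M
  refine Continuous.if_le continuous_const h2 continuous_id continuous_const ?_
  intro x hx; subst hx
  rw [if_pos (show (1:ℝ) ≤ 1 + π by linarith [Real.pi_pos])]
  funext i; fin_cases i <;> norm_num

lemma d2M_cont : Continuous d2M := by
  unfold d2M
  refine Continuous.if_le ?_ continuous_const continuous_id continuous_const ?_
  · exact cont_vec3 continuous_const (by fun_prop) (by fun_prop)
  · intro x hx; subst hx
    funext i; fin_cases i <;> norm_num [Real.cos_pi, Real.sin_pi]

lemma d3M_cont : Continuous d3M := by
  have h1 : ∀ i, Continuous fun t => d1M t i := fun i => (continuous_apply i).comp d1M_cont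
  have h2 : ∀ i, Continuous fun t => d2M t i := fun i => (continuous_apply i).comp d2M_cont
  unfold d3M
  simp only [cross_apply]
  exact cont_vec3 (by continuity) (by continuity) (by continuity)

lemma junction_null :
    ∀ᵐ t ∂(volume : Measure ℝ), t ∉ ({1, 1 + π, 2 + π} : Set ℝ) := by
  have : (volume : Measure ℝ) ({1, 1 + π, 2 + π} : Set ℝ) = 0 :=
    (Set.toFinite _).measure_zero _
  exact (MeasureTheory.measure_eq_zero_iff_ae_notMem ).mp this

lemma yM_hasDeriv : ∀ t ∈ Set.Ioo (0:ℝ) (2 + 2 * π),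
    t ∉ ({1, 1 + π, 2 + π} : Set ℝ) → HasDerivAt yM (d1M t) t := by
  intro t ht hj
  simp only [Set.mem_insert_iff, Set.mem_singleton_iff, not_or] at hj
  obtain ⟨hj1, hj2, hj3⟩ := hj
  rcases lt_trichotomy t 1 with h1 | h1 | h1
  · have hev : yM =ᶠ[nhds t] fun s => ![s, 0, 0] := by
      filter_upwards [Iio_mem_nhds h1] with s hs
      rw [Set.mem_Iio] at hs
      simp only [yM, if_pos (le_of_lt hs)]
    have : HasDerivAt (fun s : ℝ => ![s, (0:ℝ), 0]) ![1, 0, 0] t :=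
      hasDerivAt_vec3 (hasDerivAt_id t) (hasDerivAt_const t 0) (hasDerivAt_const t 0)
    have hd := this.congr_of_eventuallyEq hev
    simpa [d1M, if_pos h1.le] using hd
  · exact absurd h1 hj1
  rcases lt_trichotomy t (1 + π) with h2 | h2 | h2
  · have hev : yM =ᶠ[nhds t]
        fun s => ![1 + Real.sin (s - 1), 0, 1 - Real.cos (s - 1)] := by
      filter_upwards [Ioo_mem_nhds h1 h2] with s hs
      obtain ⟨hs1, hs2⟩ := hs
      simp only [yM, if_neg (not_le.mpr hs1), if_pos hs2.le]
    have hds : HasDerivAt (fun s : ℝ => 1 + Real.sin (s - 1)) (Real.cos (t - 1)) t := by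
      have := (((hasDerivAt_id t).sub_const 1).sin).const_add 1
      simpa using this
    have hdc : HasDerivAt (fun s : ℝ => 1 - Real.cos (s - 1)) (Real.sin (t - 1)) t := by
      have := (((hasDerivAt_id t).sub_const 1).cos).const_sub 1
      simpa using this
    have hd := (hasDerivAt_vec3 hds (hasDerivAt_const t 0) hdc).congr_of_eventuallyEq hev
    simpa [d1M, if_neg (not_le.mpr h1), if_pos h2.le] using hd
  · exact absurd h2 hj2
  rcases lt_trichotomy t (2 + π) with h3 | h3 | h3
  · have hev : yM =ᶠ[nhds t] fun s => ![2 + π - s, 0, 2] := by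
      filter_upwards [Ioo_mem_nhds h2 h3] with s hs
      obtain ⟨hs1, hs2⟩ := hs
      have : ¬ s ≤ 1 := by push_neg; linarith [Real.pi_pos]
      simp only [yM, if_neg this, if_neg (not_le.mpr hs1), if_pos hs2.le]
    have hds : HasDerivAt (fun s : ℝ => 2 + π - s) (-1 : ℝ) t := by
      have := (hasDerivAt_id t).const_sub (2 + π)
      simpa using this
    have hd := (hasDerivAt_vec3 hds (hasDerivAt_const t 0)
      (hasDerivAt_const t 2)).congr_of_eventuallyEq hev
    have h1' : ¬ t ≤ 1 := by push_neg; linarith [Real.pi_pos]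
    simpa [d1M, if_neg h1', if_neg (not_le.mpr h2), if_pos h3.le] using hd
  · exact absurd h3 hj3
  · have hev : yM =ᶠ[nhds t]
        fun s => ![Real.sin (s - 2), 0, 1 - Real.cos (s - 2)] := by
      filter_upwards [Ioi_mem_nhds h3] with s hs
      rw [Set.mem_Ioi] at hs
      have hA : ¬ s ≤ 1 := by push_neg; linarith [Real.pi_pos]
      have hB : ¬ s ≤ 1 + π := by push_neg; linarith
      have hC : ¬ s ≤ 2 + π := not_le.mpr hs
      simp only [yM, if_neg hA, if_neg hB, if_neg hC]
    have hds : HasDerivAt (fun s : ℝ => Real.sin (s - 2)) (Real.cos (t - 2)) t := by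
      have := ((hasDerivAt_id t).sub_const 2).sin
      simpa using this
    have hdc : HasDerivAt (fun s : ℝ => 1 - Real.cos (s - 2)) (Real.sin (t - 2)) t := by
      have := (((hasDerivAt_id t).sub_const 2).cos).const_sub 1
      simpa using this
    have hd := (hasDerivAt_vec3 hds (hasDerivAt_const t 0) hdc).congr_of_eventuallyEq hev
    have hA : ¬ t ≤ 1 := by push_neg; linarith [Real.pi_pos]
    have hB : ¬ t ≤ 1 + π := by push_neg; linarith
    simpa [d1M, if_neg hA, if_neg hB, if_neg (not_le.mpr h3)] using hd

lemma d1M_deriv_dot : ∀ t ∈ Set.Ioo (0:ℝ) (2 + 2 * π),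
    t ∉ ({1, 1 + π, 2 + π} : Set ℝ) → deriv d1M t ⬝ᵥ d2M t = 0 := by
  intro t ht hj
  simp only [Set.mem_insert_iff, Set.mem_singleton_iff, not_or] at hj
  obtain ⟨hj1, hj2, hj3⟩ := hj
  rcases lt_trichotomy t 1 with h1 | h1 | h1
  · have hev : d1M =ᶠ[nhds t] fun _ => ![(1:ℝ), 0, 0] := by
      filter_upwards [Iio_mem_nhds h1] with s hs
      rw [Set.mem_Iio] at hs
      simp only [d1M, if_pos (le_of_lt hs)]
    have hd := (hasDerivAt_const t ![(1:ℝ), 0, 0]).congr_of_eventuallyEq hev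
    rw [hd.deriv]
    simp [dotProduct, Fin.sum_univ_three]
  · exact absurd h1 hj1
  have hd2 : d2M t = ![0, -1, 0] := by simp [d2M, if_neg (not_le.mpr h1)]
  rcases lt_trichotomy t (1 + π) with h2 | h2 | h2
  · have hev : d1M =ᶠ[nhds t]
        fun s => ![Real.cos (s - 1), 0, Real.sin (s - 1)] := by
      filter_upwards [Ioo_mem_nhds h1 h2] with s hs
      obtain ⟨hs1, hs2⟩ := hs
      simp only [d1M, if_neg (not_le.mpr hs1), if_pos hs2.le]
    have hdc : HasDerivAt (fun s : ℝ => Real.cos (s - 1)) (-Real.sin (t - 1)) t := by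
      have := ((hasDerivAt_id t).sub_const 1).cos
      simpa using this
    have hds : HasDerivAt (fun s : ℝ => Real.sin (s - 1)) (Real.cos (t - 1)) t := by
      have := ((hasDerivAt_id t).sub_const 1).sin
      simpa using this
    have hd := (hasDerivAt_vec3 hdc (hasDerivAt_const t 0) hds).congr_of_eventuallyEq hev
    rw [hd.deriv, hd2]
    simp [dotProduct, Fin.sum_univ_three]
  · exact absurd h2 hj2
  rcases lt_trichotomy t (2 + π) with h3 | h3 | h3
  · have hev : d1M =ᶠ[nhds t] fun _ => ![(-1:ℝ), 0, 0] := by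
      filter_upwards [Ioo_mem_nhds h2 h3] with s hs
      obtain ⟨hs1, hs2⟩ := hs
      have : ¬ s ≤ 1 := by push_neg; linarith [Real.pi_pos]
      simp only [d1M, if_neg this, if_neg (not_le.mpr hs1), if_pos hs2.le]
    have hd := (hasDerivAt_const t ![(-1:ℝ), 0, 0]).congr_of_eventuallyEq hev
    rw [hd.deriv, hd2]
    simp [dotProduct, Fin.sum_univ_three]
  · exact absurd h3 hj3
  · have hev : d1M =ᶠ[nhds t]
        fun s => ![Real.cos (s - 2), 0, Real.sin (s - 2)] := by
      filter_upwards [Ioi_mem_nhds h3] with s hs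
      rw [Set.mem_Ioi] at hs
      have hA : ¬ s ≤ 1 := by push_neg; linarith [Real.pi_pos]
      have hB : ¬ s ≤ 1 + π := by push_neg; linarith
      simp only [d1M, if_neg hA, if_neg hB, if_neg (not_le.mpr hs)]
    have hdc : HasDerivAt (fun s : ℝ => Real.cos (s - 2)) (-Real.sin (t - 2)) t := by
      have := ((hasDerivAt_id t).sub_const 2).cos
      simpa using this
    have hds : HasDerivAt (fun s : ℝ => Real.sin (s - 2)) (Real.cos (t - 2)) t := by
      have := ((hasDerivAt_id t).sub_const 2).sin
      simpa using this
    have hd := (hasDerivAt_vec3 hdc (hasDerivAt_const t 0) hds).congr_of_eventuallyEq hev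
    rw [hd.deriv, hd2]
    simp [dotProduct, Fin.sum_univ_three]

lemma det_vec3 (u v w : Fin 3 → ℝ) : Matrix.det ![u, v, w] = u 0 * v 1 * w 2 - u 0 * v 2 * w 1
    - u 1 * v 0 * w 2 + u 1 * v 2 * w 0 + u 2 * v 0 * w 1 - u 2 * v 1 * w 0 := by
  erw [Matrix.det_fin_three]; simp [Matrix.cons_val_two]

theorem mobius_example :
    ContinuousOn yM (Set.Icc 0 (2 + 2 * π)) ∧
    ContinuousOn d1M (Set.Icc 0 (2 + 2 * π)) ∧
    ContinuousOn d2M (Set.Icc 0 (2 + 2 * π)) ∧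
    ContinuousOn d3M (Set.Icc 0 (2 + 2 * π)) ∧
    (∀ᵐ t ∂(volume.restrict (Set.Ioo 0 (2 + 2 * π))), HasDerivAt yM (d1M t) t) ∧
    (∀ᵐ t ∂(volume.restrict (Set.Ioo 0 (2 + 2 * π))), deriv d1M t ⬝ᵥ d2M t = 0) ∧
    (∀ t ∈ Set.Icc 0 (2 + 2 * π),
      d1M t ⬝ᵥ d1M t = 1 ∧ d2M t ⬝ᵥ d2M t = 1 ∧ d3M t ⬝ᵥ d3M t = 1 ∧
      d1M t ⬝ᵥ d2M t = 0 ∧ d1M t ⬝ᵥ d3M t = 0 ∧ d2M t ⬝ᵥ d3M t = 0 ∧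
      Matrix.det ![d1M t, d2M t, d3M t] = 1) ∧
    yM 0 = 0 ∧ yM (2 + 2 * π) = 0 ∧
    d1M 0 = ![1, 0, 0] ∧ d2M 0 = ![0, 1, 0] ∧ d3M 0 = ![0, 0, 1] ∧
    d1M (2 + 2 * π) = ![1, 0, 0] ∧ d2M (2 + 2 * π) = ![0, -1, 0] ∧
    d3M (2 + 2 * π) = ![0, 0, -1] := by
  have hpi := Real.pi_pos
  refine ⟨yM_cont.continuousOn, d1M_cont.continuousOn, d2M_cont.continuousOn,
    d3M_cont.continuousOn, ?_, ?_, ?_, ?_, ?_, ?_, ?_, ?_, ?_, ?_, ?_⟩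
  · rw [ae_restrict_iff' measurableSet_Ioo]
    filter_upwards [junction_null] with t ht hIoo
    exact yM_hasDeriv t hIoo ht
  · rw [ae_restrict_iff' measurableSet_Ioo]
    filter_upwards [junction_null] with t ht hIoo
    exact d1M_deriv_dot t hIoo ht
  · intro t _
    rcases le_or_gt t 1 with h1 | h1
    · have e1 : d1M t = ![1, 0, 0] := by simp [d1M, if_pos h1]
      have e2 : d2M t = ![0, Real.cos (π * t), Real.sin (π * t)] := by
        simp [d2M, if_pos h1]
      have e3 : d3M t = ![0, -Real.sin (π * t), Real.cos (π * t)] := by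
        rw [d3M, e1, e2, cross_apply]
        norm_num [Matrix.cons_val_two]
      rw [e1, e2, e3]
      have hsc := Real.sin_sq_add_cos_sq (π * t)
      refine ⟨?_, ?_, ?_, ?_, ?_, ?_, ?_⟩ <;>
        simp [dotProduct, Fin.sum_univ_three, det_vec3, Matrix.cons_val_two] <;> nlinarith
    · have e2 : d2M t = ![0, -1, 0] := by simp [d2M, if_neg (not_le.mpr h1)]
      have key : ∀ a b : ℝ, a ^ 2 + b ^ 2 = 1 → d1M t = ![a, 0, b] →
          d1M t ⬝ᵥ d1M t = 1 ∧ d2M t ⬝ᵥ d2M t = 1 ∧ d3M t ⬝ᵥ d3M t = 1 ∧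
          d1M t ⬝ᵥ d2M t = 0 ∧ d1M t ⬝ᵥ d3M t = 0 ∧ d2M t ⬝ᵥ d3M t = 0 ∧
          Matrix.det ![d1M t, d2M t, d3M t] = 1 := by
        intro a b hab e1
        have e3 : d3M t = ![b, 0, -a] := by
          rw [d3M, e1, e2, cross_apply]
          norm_num [Matrix.cons_val_two]
        rw [e1, e3]
        refine ⟨?_, ?_, ?_, ?_, ?_, ?_, ?_⟩ <;>
          simp [e2, dotProduct, Fin.sum_univ_three, det_vec3, Matrix.cons_val_two] <;> nlinarith
      rcases le_or_gt t (1 + π) with h2 | h2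
      · exact key (Real.cos (t - 1)) (Real.sin (t - 1))
          (by nlinarith [Real.sin_sq_add_cos_sq (t - 1)])
          (by simp [d1M, if_neg (not_le.mpr h1), if_pos h2])
      rcases le_or_gt t (2 + π) with h3 | h3
      · refine key (-1) 0 (by norm_num) ?_
        simp [d1M, if_neg (not_le.mpr h1), if_neg (not_le.mpr h2), if_pos h3]
      · refine key (Real.cos (t - 2)) (Real.sin (t - 2))
          (by nlinarith [Real.sin_sq_add_cos_sq (t - 2)]) ?_
        simp [d1M, if_neg (not_le.mpr h1), if_neg (not_le.mpr h2), if_neg (not_le.mpr h3)]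
  · funext i; fin_cases i <;> norm_num [yM]
  · have hA : ¬ (2 + 2 * π : ℝ) ≤ 1 := by push_neg; linarith
    have hB : ¬ (2 + 2 * π : ℝ) ≤ 1 + π := by push_neg; linarith
    have hC : ¬ (2 + 2 * π : ℝ) ≤ 2 + π := by push_neg; linarith
    funext i; fin_cases i <;>
      norm_num [yM, hA, hB, hC, show (2:ℝ) + 2 * π - 2 = 2 * π by ring,
        Real.sin_two_pi, Real.cos_two_pi]
  · simp [d1M]
  · funext i; fin_cases i <;> norm_num [d2M]
  · funext i; fin_cases i <;>
      norm_num [d3M, cross_apply, d1M, d2M, Matrix.cons_val_two]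
  · have hA : ¬ (2 + 2 * π : ℝ) ≤ 1 := by push_neg; linarith
    have hB : ¬ (2 + 2 * π : ℝ) ≤ 1 + π := by push_neg; linarith
    have hC : ¬ (2 + 2 * π : ℝ) ≤ 2 + π := by push_neg; linarith
    funext i; fin_cases i <;>
      norm_num [d1M, hA, hB, hC, show (2:ℝ) + 2 * π - 2 = 2 * π by ring,
        Real.sin_two_pi, Real.cos_two_pi]
  · have hA : ¬ (2 + 2 * π : ℝ) ≤ 1 := by push_neg; linarith
    simp [d2M, hA]
  · have hA : ¬ (2 + 2 * π : ℝ) ≤ 1 := by push_neg; linarith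
    have hB : ¬ (2 + 2 * π : ℝ) ≤ 1 + π := by push_neg; linarith
    have hC : ¬ (2 + 2 * π : ℝ) ≤ 2 + π := by push_neg; linarith
    funext i; fin_cases i <;>
      norm_num [d3M, cross_apply, d1M, d2M, Matrix.cons_val_two, hA, hB, hC,
        show (2:ℝ) + 2 * π - 2 = 2 * π by ring, Real.sin_two_pi, Real.cos_two_pi]
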